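/- Let $f$ be analytic on $\{|z|<R\}$ with $f(0)=0$, let $z_1,\dots,z_k\in\mathbb{C}$ with $\max_i|z_i|\le\rho<R$, and suppose $f(z)\cdot p'(z)=\sum_{j=1}^k f(z_j)\frac{p(z)}{z-z_j}$ for all $z$ with $|z|<R$, where $p(z)=\prod_{j=1}^k(z-z_j)$. Then $f$ is constant, hence $f\equiv0$. -/

import Mathlib

open Polynomial Metric Finset Topology

/-- derivative of a product of linear factors -/
lemma deriv_prod_lin {k : ℕ} (z : Fin k → ℂ) :
    derivative (∏ j, (X - C (z j))) = ∑ j, ∏ i ∈ Finset.univ.erase j, (X - C (z i)) := by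
  rw [Finset.prod_eq_multiset_prod, derivative_prod, ← Finset.sum_eq_multiset_sum]
  refine Finset.sum_congr rfl fun j _ => ?_
  rw [derivative_X_sub_C, mul_one, ← Finset.erase_val, ← Finset.prod_eq_multiset_prod]

theorem f_vanishes (R ρ : ℝ) (k : ℕ) (hk : 1 ≤ k) (hρR : ρ < R)
    (z : Fin k → ℂ) (hz : ∀ i, ‖z i‖ ≤ ρ)
    (f : ℂ → ℂ) (hf : DifferentiableOn ℂ f (Metric.ball (0 : ℂ) R))
    (hf0 : f 0 = 0)
    (heq : ∀ w ∈ Metric.ball (0 : ℂ) R,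
      f w * (Polynomial.derivative
          (∏ j, (Polynomial.X - Polynomial.C (z j)))).eval w
        = ∑ j, f (z j) * ∏ i ∈ Finset.univ.erase j, (w - z i)) :
    ∀ w ∈ Metric.ball (0 : ℂ) R, f w = 0 := by
  haveI : Nonempty (Fin k) := ⟨⟨0, hk⟩⟩
  have hρ0 : 0 ≤ ρ := le_trans (norm_nonneg _) (hz ⟨0, hk⟩)
  set P : Polynomial ℂ := ∏ j, (X - C (z j)) with hP
  set D : Polynomial ℂ := derivative P with hD
  set Q : Polynomial ℂ := ∑ j, C (f (z j)) * ∏ i ∈ Finset.univ.erase j, (X - C (z i)) with hQdef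
  have hball : ∀ w : ℂ, ‖w‖ ≤ ρ → w ∈ ball (0 : ℂ) R := by
    intro w hw
    rw [mem_ball_zero_iff]
    exact lt_of_le_of_lt hw hρR
  have h0ball : (0 : ℂ) ∈ ball (0 : ℂ) R := by
    rw [mem_ball_zero_iff]; simpa using lt_of_le_of_lt hρ0 hρR
  have heq' : ∀ w ∈ ball (0 : ℂ) R, f w * D.eval w = Q.eval w := by
    intro w hw
    rw [heq w hw, hQdef]
    simp [eval_finset_sum, eval_prod]
  have hPdeg : P.natDegree = k := by
    rw [hP, natDegree_prod_of_monic _ _ (fun i _ => monic_X_sub_C _)]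
    simp
  have hPmonic : P.Monic := monic_prod_of_monic _ _ (fun i _ => monic_X_sub_C _)
  have hDcoeff : D.coeff (k - 1) = (k : ℂ) := by
    rw [hD, coeff_derivative]
    have h1 : k - 1 + 1 = k := Nat.succ_pred_eq_of_pos hk
    rw [h1]
    have : P.coeff k = 1 := by rw [← hPdeg]; exact hPmonic.coeff_natDegree
    rw [this, one_mul]
    norm_cast
  have hD0 : D ≠ 0 := by
    intro h
    rw [h, coeff_zero] at hDcoeff
    exact Nat.cast_ne_zero.mpr (by omega) hDcoeff.symm
  have hDdeg : D.natDegree = k - 1 := by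
    refine le_antisymm ?_ ?_
    · rw [hD, ← hPdeg]; exact natDegree_derivative_le P
    · exact le_natDegree_of_ne_zero (by rw [hDcoeff]; exact Nat.cast_ne_zero.mpr (by omega))
  have hQdeg : Q.natDegree ≤ k - 1 := by
    refine natDegree_sum_le_of_forall_le _ _ fun j _ => ?_
    refine le_trans (natDegree_mul_le) ?_
    rw [natDegree_C, zero_add, natDegree_prod_of_monic _ _ (fun i _ => monic_X_sub_C _)]
    simp [Finset.card_erase_of_mem]
  -- Gauss–Lucas
  have hGL : ∀ r : ℂ, D.IsRoot r → ‖r‖ ≤ ρ := by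
    intro r hr
    by_cases hmem : ∃ j, r = z j
    · obtain ⟨j, rfl⟩ := hmem; exact hz j
    push_neg at hmem
    have hne : ∀ j, r - z j ≠ 0 := fun j => sub_ne_zero.mpr (hmem j)
    have hev : ∑ j, ∏ i ∈ Finset.univ.erase j, (r - z i) = 0 := by
      have := hr
      rw [IsRoot, hD, deriv_prod_lin, eval_finset_sum] at this
      simpa [eval_prod] using this
    have hprod : (∏ i, (r - z i)) ≠ 0 := Finset.prod_ne_zero_iff.mpr fun i _ => hne i
    have hsum : ∑ j, (r - z j)⁻¹ = 0 := by
      have hterm : ∀ j : Fin k, ∏ i ∈ Finset.univ.erase j, (r - z i)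
          = (∏ i, (r - z i)) * (r - z j)⁻¹ := by
        intro j
        rw [← Finset.mul_prod_erase _ _ (Finset.mem_univ j), mul_comm (r - z j),
          mul_assoc, mul_inv_cancel₀ (hne j), mul_one]
      rw [Finset.sum_congr rfl (fun j _ => hterm j), ← Finset.mul_sum] at hev
      exact (mul_eq_zero.mp hev).resolve_left hprod
    set t : Fin k → ℝ := fun j => (Complex.normSq (r - z j))⁻¹ with ht
    have htpos : ∀ j, 0 < t j := fun j =>
      inv_pos.mpr (Complex.normSq_pos.mpr (hne j))
    have key : ∑ j, (t j : ℂ) * (r - z j) = 0 := by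
      have := congrArg (starRingEnd ℂ) hsum
      rw [map_sum, map_zero] at this
      rw [← this]
      refine Finset.sum_congr rfl fun j _ => ?_
      rw [Complex.inv_def]
      simp [ht, mul_comm]
    have key2 : ((∑ j, t j : ℝ) : ℂ) * r = ∑ j, (t j : ℂ) * z j := by
      have : ∑ j, ((t j : ℂ) * r - (t j : ℂ) * z j) = 0 := by
        simpa [mul_sub] using key
      rw [Finset.sum_sub_distrib, sub_eq_zero] at this
      push_cast
      rw [Finset.sum_mul]
      exact this
    have hT : 0 < ∑ j, t j := Finset.sum_pos (fun j _ => htpos j) Finset.univ_nonempty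
    have habs : (∑ j, t j) * ‖r‖ ≤ (∑ j, t j) * ρ := by
      have h1 : (∑ j, t j) * ‖r‖ = ‖∑ j, (t j : ℂ) * z j‖ := by
        rw [← key2, norm_mul, Complex.norm_real, Real.norm_eq_abs, abs_of_pos hT]
      rw [h1]
      calc ‖∑ j, (t j : ℂ) * z j‖ ≤ ∑ j, ‖(t j : ℂ) * z j‖ :=
            norm_sum_le _ _
        _ ≤ ∑ j, t j * ρ := by
            refine Finset.sum_le_sum fun j _ => ?_
            rw [norm_mul, Complex.norm_real, Real.norm_eq_abs, abs_of_pos (htpos j)]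
            exact mul_le_mul_of_nonneg_left (hz j) (htpos j).le
        _ = (∑ j, t j) * ρ := by rw [Finset.sum_mul]
    exact le_of_mul_le_mul_left habs hT
  have hrball : ∀ r : ℂ, D.IsRoot r → r ∈ ball (0 : ℂ) R := fun r hr => hball r (hGL r hr)
  have hanal_f : AnalyticOnNhd ℂ f (ball (0 : ℂ) R) := hf.analyticOnNhd isOpen_ball
  have hanal_poly : ∀ p : Polynomial ℂ, AnalyticOnNhd ℂ (fun w => p.eval w) (ball (0 : ℂ) R) :=
    fun p => p.differentiable.differentiableOn.analyticOnNhd isOpen_ball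
  have hpreconn : IsPreconnected (ball (0 : ℂ) R) := (convex_ball _ _).isPreconnected
  -- main claim
  obtain ⟨c, hc⟩ : ∃ c : ℂ, ∀ w ∈ ball (0 : ℂ) R, D.eval w ≠ 0 → f w = c := by
    by_cases hQ : Q = 0
    · refine ⟨0, fun w hw hDw => ?_⟩
      have := heq' w hw
      rw [hQ, eval_zero] at this
      exact (mul_eq_zero.mp this).resolve_right hDw
    -- D ∣ Q
    have hcount : ∀ r : ℂ, rootMultiplicity r D ≤ rootMultiplicity r Q := by
      intro r
      by_contra hlt
      push_neg at hlt
      set s := rootMultiplicity r Q with hs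
      set m := rootMultiplicity r D with hm
      have hmpos : 0 < m := lt_of_le_of_lt (Nat.zero_le _) hlt
      have hrroot : D.IsRoot r := (rootMultiplicity_pos hD0).mp hmpos
      have hrb : r ∈ ball (0 : ℂ) R := hrball r hrroot
      set T := Q /ₘ (X - C r) ^ s with hTdef
      set S := D /ₘ (X - C r) ^ m with hSdef
      have hQfact : (X - C r) ^ s * T = Q := pow_mul_divByMonic_rootMultiplicity_eq Q r
      have hDfact : (X - C r) ^ m * S = D := pow_mul_divByMonic_rootMultiplicity_eq D r
      have hTr : T.eval r ≠ 0 := eval_divByMonic_pow_rootMultiplicity_ne_zero r hQ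
      have hEq : Set.EqOn (fun w => T.eval w)
          (fun w => f w * ((S * (X - C r) ^ (m - s)).eval w)) (ball (0 : ℂ) R) := by
        refine AnalyticOnNhd.eqOn_of_preconnected_of_frequently_eq (hanal_poly T)
          (hanal_f.mul (hanal_poly _)) hpreconn hrb ?_
        have hev : ∀ᶠ w in 𝓝[≠] r, w ∈ ball (0 : ℂ) R :=
          eventually_nhdsWithin_of_eventually_nhds (isOpen_ball.eventually_mem hrb)
        refine ((hev.and self_mem_nhdsWithin).mono fun w ⟨hw, hwr⟩ => ?_).frequently
        have hwr' : (w - r) ≠ 0 := sub_ne_zero.mpr hwr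
        have h1 := heq' w hw
        rw [← hQfact, ← hDfact] at h1
        simp only [eval_mul, eval_pow, eval_sub, eval_X, eval_C] at h1 ⊢
        have hms : s + (m - s) = m := Nat.add_sub_cancel' hlt.le
        rw [← hms, pow_add] at h1
        have h2 : (w - r) ^ s * T.eval w
            = (w - r) ^ s * (f w * (S.eval w * (w - r) ^ (m - s))) := by linear_combination -h1
        exact mul_left_cancel₀ (pow_ne_zero _ hwr') h2
      have := hEq hrb
      simp only [eval_mul, eval_pow, eval_sub, eval_X, eval_C, sub_self] at this
      rw [zero_pow (Nat.sub_ne_zero_of_lt hlt), mul_zero, mul_zero] at this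
      exact hTr this
    have hD_dvd : D ∣ Q := by
      have hsplit : Multiset.card D.roots = D.natDegree :=
        splits_iff_card_roots.mp (IsAlgClosed.splits D)
      have h1 : C D.leadingCoeff * (D.roots.map fun a => X - C a).prod = D :=
        C_leadingCoeff_mul_prod_multiset_X_sub_C hsplit
      have hle : D.roots ≤ Q.roots := by
        rw [Multiset.le_iff_count]
        intro a
        rw [count_roots, count_roots]
        exact hcount a
      have h2 : (D.roots.map fun a => X - C a).prod ∣ Q :=
        dvd_trans (Multiset.prod_dvd_prod_of_le (Multiset.map_le_map hle))
          (prod_multiset_X_sub_C_dvd Q)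
      rw [← h1]
      obtain ⟨E, hE⟩ := h2
      exact ⟨C (D.leadingCoeff)⁻¹ * E, by
        rw [hE, mul_mul_mul_comm, ← C_mul,
          mul_inv_cancel₀ (leadingCoeff_ne_zero.mpr hD0), map_one, one_mul]⟩
    obtain ⟨E, hE⟩ := hD_dvd
    have hE0 : E ≠ 0 := by rintro rfl; rw [mul_zero] at hE; exact hQ hE
    have hEdeg : E.natDegree = 0 := by
      have := natDegree_mul hD0 hE0
      rw [← hE] at this
      omega
    obtain ⟨a, rfl⟩ := natDegree_eq_zero.mp hEdeg
    refine ⟨a, fun w hw hDw => ?_⟩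
    have h1 := heq' w hw
    rw [hE, eval_mul, eval_C] at h1
    exact mul_right_cancel₀ hDw (h1.trans (mul_comm _ _))
  -- conclude f ≡ c on the ball, then c = 0
  have hfin : Set.Finite {x : ℂ | D.IsRoot x} := finite_setOf_isRoot hD0
  have hEqOn : Set.EqOn f (fun _ => c) (ball (0 : ℂ) R) := by
    refine hanal_f.eqOn_of_preconnected_of_frequently_eq analyticOnNhd_const hpreconn h0ball ?_
    have hclosed : IsClosed ({x : ℂ | D.IsRoot x} \ {0}) := hfin.diff.isClosed
    have h0not : (0 : ℂ) ∉ {x : ℂ | D.IsRoot x} \ {0} := fun h => h.2 rfl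
    have hmem : ({x : ℂ | D.IsRoot x} \ {0})ᶜ ∈ 𝓝 (0 : ℂ) :=
      hclosed.isOpen_compl.mem_nhds h0not
    have hev1 : ∀ᶠ w in 𝓝[≠] (0 : ℂ), w ∈ ({x : ℂ | D.IsRoot x} \ {0})ᶜ :=
      eventually_nhdsWithin_of_eventually_nhds hmem
    have hev2 : ∀ᶠ w in 𝓝[≠] (0 : ℂ), w ∈ ball (0 : ℂ) R :=
      eventually_nhdsWithin_of_eventually_nhds (isOpen_ball.eventually_mem h0ball)
    refine (((hev1.and hev2).and self_mem_nhdsWithin).mono ?_).frequently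
    rintro w ⟨⟨hw1, hw2⟩, hw3⟩
    refine hc w hw2 fun hroot => hw1 ⟨hroot, hw3⟩
  have hc0 : c = 0 := (hEqOn h0ball).symm.trans hf0
  intro w hw
  rw [hEqOn hw, hc0]
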